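/- arXiv:1504.07181 — 4 statements merged into one kernel-verified Lean document; each statement's English description precedes it below -/
import Mathlib

section
/- Construction of a semigroup from index data: Let S be a semigroup, and for each x ∈ S let T_x be a nonempty set, with T_x pairwise disjoint. Suppose for each triple (x, y, xy) there is a map f_{(x,y,xy)} : T_x → T_{xy}, satisfying f_{(xy,z,xyz)} ∘ f_{(x,y,xy)} = f_{(x,yz,xyz)} for all x, y, z ∈ S. Define on T = ⋃_{x∈S} T_x the operation a ∘ b = f_{(x,y,xy)}(a) for a ∈ T_x, b ∈ T_y. Then (T, ∘) is a semigroup (the operation is associative). -/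
/-- The θ-construction yields a semigroup.  The disjoint union `T = ⋃_{x∈S} T_x` of the
nonempty pairwise disjoint fibers is modelled by a surjection `π : T → S` (the fiber of
`x` is `π ⁻¹ {x}`); the structure maps `f_{(x,y,xy)} : T_x → T_{xy}` are modelled by
`f : S → S → T → T` sending fibers to fibers, satisfying the cocycle condition.  The
operation `a ∘ b = f_{(π a, π b, π a * π b)}(a)` is associative. -/
theorem theta_construction_semigroup {S T : Type*} [Semigroup S]
    (π : T → S) (hπ : Function.Surjective π)
    (f : S → S → T → T)
    (hmap : ∀ (x y : S) (t : T), π t = x → π (f x y t) = x * y)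
    (hcoc : ∀ (x y z : S) (t : T), π t = x → f (x * y) z (f x y t) = f x (y * z) t) :
    ∀ a b c : T,
      f (π (f (π a) (π b) a)) (π c) (f (π a) (π b) a)
        = f (π a) (π (f (π b) (π c) b)) a := by
  intro a b c
  rw [hmap (π a) (π b) a rfl, hmap (π b) (π c) b rfl]
  exact hcoc (π a) (π b) (π c) a rfl
end

section
/- In the θ-construction (T, ∘) derived from a semigroup S, if S is left reductive then the θ(T)-classes of T are exactly the fibers T_x (x ∈ S); i.e., if a ∈ T_x and b ∈ T_y satisfy t ∘ a = t ∘ b for all t ∈ T, then x = y. -/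
/-- In the θ-construction `(T, ∘)` derived from a left reductive semigroup `S`, the
`θ(T)`-classes are exactly the fibers: if `a ∈ T_x`, `b ∈ T_y` and `t ∘ a = t ∘ b`
for all `t ∈ T`, then `x = y` (i.e. `π a = π b`). -/
theorem theta_construction_classes_eq_fibers {S T : Type*} [Semigroup S]
    (hred : ∀ a b : S, (∀ x : S, x * a = x * b) → a = b)
    (π : T → S) (hπ : Function.Surjective π)
    (f : S → S → T → T)
    (hmap : ∀ (x y : S) (t : T), π t = x → π (f x y t) = x * y)
    (hcoc : ∀ (x y z : S) (t : T), π t = x → f (x * y) z (f x y t) = f x (y * z) t) :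
    ∀ a b : T, (∀ t : T, f (π t) (π a) t = f (π t) (π b) t) → π a = π b := by
  intro a b h
  apply hred
  intro x
  obtain ⟨t, ht⟩ := hπ x
  have h1 := hmap (π t) (π a) t rfl
  have h2 := hmap (π t) (π b) t rfl
  rw [h t] at h1
  rw [← ht, ← h1, ← h2]
end

section
/- Let S be a semigroup whose congruences satisfy the ascending chain condition. Then there exists a nonnegative integer n such that the chain ι^(0) ⊆ ι^(1) ⊆ ⋯ stabilizes at step n (ι^(n) = ι^(n+1) = ⋯), where ι^(0) is the identity relation and ι^(i+1) = (ι^(i))*, and moreover S/ι^(n) is left reductive. -/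
/-- For a congruence `ρ` on a semigroup `S`, the congruence `ρ*`:
`(a,b) ∈ ρ*` iff `(x*a, x*b) ∈ ρ` for all `x`. -/
def conStar {S : Type*} [Semigroup S] (ρ : Con S) : Con S where
  r a b := ∀ x : S, ρ (x * a) (x * b)
  iseqv := ⟨fun _ _ => ρ.refl _, fun h x => ρ.symm (h x),
    fun h1 h2 x => ρ.trans (h1 x) (h2 x)⟩
  mul' := by
    intro a b c d h1 h2 x
    have e1 : ρ ((x * a) * c) ((x * b) * c) := ρ.mul (h1 x) (ρ.refl c)
    have e2 : ρ ((x * b) * c) ((x * b) * d) := h2 (x * b)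
    have := ρ.trans e1 e2
    simpa [mul_assoc] using this

/-- The chain `ι^(0) ⊆ ι^(1) ⊆ ⋯` with `ι^(0)` the identity congruence and
`ι^(i+1) = (ι^(i))*`. -/
def iotaCon (S : Type*) [Semigroup S] : ℕ → Con S
  | 0 => ⊥
  | i + 1 => conStar (iotaCon S i)

lemma conStar_mono {S : Type*} [Semigroup S] {ρ σ : Con S} (h : ρ ≤ σ) :
    conStar ρ ≤ conStar σ := fun _ _ hab x => h (hab x)

lemma iotaCon_mono_succ (S : Type*) [Semigroup S] (n : ℕ) :
    iotaCon S n ≤ iotaCon S (n + 1) := by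
  induction n with
  | zero =>
    intro a b hab
    have : a = b := hab
    subst this; exact (iotaCon S 1).refl a
  | succ k ih => exact conStar_mono ih

/-- If the congruences of a semigroup `S` satisfy the ascending chain condition, then
the chain `ι^(0) ⊆ ι^(1) ⊆ ⋯` stabilizes at some `n`, and `S/ι^(n)` is left reductive
(expressed on representatives: if `x̄ā = x̄b̄` for all `x̄`, then `ā = b̄`). -/
theorem iota_chain_stabilizes_left_reductive (S : Type*) [Semigroup S]
    (hacc : ∀ c : ℕ → Con S, (∀ n, c n ≤ c (n + 1)) → ∃ N, ∀ m, N ≤ m → c m = c N) :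
    ∃ n : ℕ, (∀ m, n ≤ m → iotaCon S m = iotaCon S n) ∧
      ∀ a b : S, (∀ x : S, iotaCon S n (x * a) (x * b)) → iotaCon S n a b := by
  obtain ⟨N, hN⟩ := hacc (iotaCon S) (iotaCon_mono_succ S)
  refine ⟨N, hN, fun a b h => ?_⟩
  have : iotaCon S (N + 1) a b := h
  rwa [hN (N + 1) (Nat.le_succ N)] at this
end

section
/- For a semigroup S, the congruence θ_n (defined by (a,b) ∈ θ_n iff xa = xb for all x ∈ S^n) equals the universal relation ω_S for some positive integer n if and only if S is an ideal extension of a left zero semigroup by a nilpotent semigroup; equivalently, there exist a positive integer n and a left zero subsemigroup L of S that is an ideal, with S^n ⊆ L. -/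
/-- `IsProd n x` means `x` is a product of `n` elements of the semigroup, i.e. `x ∈ Sⁿ`. -/
inductive IsProd {S : Type*} [Semigroup S] : ℕ → S → Prop
  | base (s : S) : IsProd 1 s
  | step {n : ℕ} {a : S} (b : S) : IsProd n a → IsProd (n + 1) (a * b)

lemma IsProd.mul_left {S : Type*} [Semigroup S] {n : ℕ} {a : S} (b : S)
    (h : IsProd n a) : IsProd (n + 1) (b * a) := by
  induction h with
  | base s => exact IsProd.step s (IsProd.base b)
  | step c _ ih => rw [← mul_assoc]; exact IsProd.step c ih

lemma IsProd.split {S : Type*} [Semigroup S] {n : ℕ} {x : S}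
    (h : IsProd (n + 1 + 1) x) : ∃ y c : S, IsProd (n + 1) y ∧ x = y * c := by
  cases h with
  | step b ha => exact ⟨_, b, ha, rfl⟩

/-- `θ_n` is the universal relation `ω_S` for some positive `n` (i.e. `x*a = x*b` for
all `a, b ∈ S` and all `x ∈ Sⁿ`) if and only if `S` is an ideal extension of a left
zero semigroup by a nilpotent semigroup, i.e. there are a positive integer `n` and a
left zero subsemigroup `L` of `S` which is an ideal, with `Sⁿ ⊆ L`. -/
theorem thetaN_universal_iff_ideal_extension {S : Type*} [Semigroup S] :
    (∃ n : ℕ, 1 ≤ n ∧ ∀ a b : S, ∀ x : S, IsProd n x → x * a = x * b) ↔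
    (∃ n : ℕ, 1 ≤ n ∧ ∃ L : Set S,
      (∀ u ∈ L, ∀ v ∈ L, u * v = u) ∧                 -- L is a left zero semigroup
      (∀ l ∈ L, ∀ s : S, l * s ∈ L ∧ s * l ∈ L) ∧     -- L is an ideal of S
      (∀ x : S, IsProd n x → x ∈ L)) := by            -- Sⁿ ⊆ L
  constructor
  · rintro ⟨n, hn, h⟩
    have absorb : ∀ u : S, IsProd (n + 1) u → ∀ s : S, u * s = u := by
      intro u hu s
      cases hu with
      | base t => omega
      | step b ha => rw [mul_assoc]; exact h _ _ _ ha
    refine ⟨n + 1, by omega, {x | IsProd (n + 1) x}, ?_, ?_, fun x hx => hx⟩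
    · intro u hu v _
      exact absorb u hu v
    · intro l hl s
      refine ⟨by rw [absorb l hl s]; exact hl, ?_⟩
      have h2 : IsProd (n + 1 + 1) (s * l) := IsProd.mul_left s hl
      obtain ⟨y, c, hy, hxe⟩ := h2.split
      rw [hxe, absorb y hy c]; exact hy
  · rintro ⟨n, hn, L, hlz, hideal, hsub⟩
    refine ⟨n, hn, fun a b x hx => ?_⟩
    have hxL : x ∈ L := hsub x hx
    have key : ∀ s : S, x * s = x := by
      intro s
      have h1 : x * s ∈ L := (hideal x hxL s).1
      have h2 : s * x ∈ L := (hideal x hxL s).2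
      have h3 : x * (s * x) = x := hlz x hxL _ h2
      have h4 : (x * s) * x = x * s := hlz _ h1 x hxL
      rw [mul_assoc] at h4
      rw [h3] at h4
      exact h4.symm
    rw [key a, key b]
end
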